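/- Let γ > 0, let q be a probability density on ℝ^m, and let f(y|x) and g(y|x) be measurable functions of (x,y) ∈ ℝ^m × ℝ that are nonnegative, such that for q-almost every x, f(·|x) and g(·|x) satisfy the integrability conditions of the density-power score and all conditional scores are q-integrable. Then the conditional density-power score satisfies S_power(f,g;q) ≥ S_power(f,f;q), and equality S_power(f,g;q) = S_power(f,f;q) holds if and only if f(y|x) = g(y|x) almost everywhere with respect to the measure q(x)dx dy. -/

import Mathlib

open MeasureTheory Real

lemma key_ineq {γ a b : ℝ} (hγ : 0 < γ) (ha : 0 ≤ a) (hb : 0 ≤ b) :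
    (1 + γ) * (a * b ^ γ) ≤ a ^ (1 + γ) + γ * b ^ (1 + γ) ∧
      (a ^ (1 + γ) + γ * b ^ (1 + γ) - (1 + γ) * (a * b ^ γ) = 0 ↔ a = b) := by
  have hp : (1:ℝ) < 1 + γ := by linarith
  rcases eq_or_lt_of_le hb with hb0 | hb0
  · rw [← hb0, Real.zero_rpow hγ.ne', Real.zero_rpow (by positivity : (1:ℝ)+γ ≠ 0)]
    constructor
    · simp [Real.rpow_nonneg ha]
    · rw [mul_zero, mul_zero, mul_zero, add_zero, sub_zero,
        Real.rpow_eq_zero ha (by positivity)]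
  · have hbp : (0:ℝ) < b ^ (1 + γ) := Real.rpow_pos_of_pos hb0 _
    have hab : a * b ^ γ * (1 + γ) = (1 + (1 + γ) * (a / b - 1) + (1 + γ)) * b ^ (1 + γ) - b ^ (1 + γ) := by
      have h1 : b ^ (1 + γ) = b * b ^ γ := by
        rw [Real.rpow_add hb0, Real.rpow_one]
      field_simp [h1]
      rw [h1]; ring
    have ht : -1 ≤ a / b - 1 := by
      have : 0 ≤ a / b := div_nonneg ha hb0.le
      linarith
    have hrp : ((1 : ℝ) + (a / b - 1)) ^ (1 + γ) * b ^ (1 + γ) = a ^ (1 + γ) := by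
      rw [← Real.mul_rpow (by linarith) hb0.le]
      congr 1
      field_simp
      ring
    have hle := one_add_mul_self_le_rpow_one_add ht hp.le
    constructor
    · nlinarith [mul_le_mul_of_nonneg_right hle hbp.le]
    · constructor
      · intro heq
        by_contra hne
        have hs' : a / b - 1 ≠ 0 := by
          intro h
          apply hne
          field_simp at h
          linarith
        have hlt := one_add_mul_self_lt_rpow_one_add ht hs' hp
        nlinarith [mul_lt_mul_of_pos_right hlt hbp]
      · rintro rfl
        have h1 : a ^ (1 + γ) = a * a ^ γ := by
          rw [Real.rpow_add' ha (by positivity), Real.rpow_one]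
        rw [h1]; ring

/-- The conditional density-power score
`S_power(f,g;q) = γ⟨q g^{1+γ}⟩ − (1+γ)⟨f q g^γ⟩` satisfies
`S_power(f,g;q) ≥ S_power(f,f;q) = −⟨q f^{1+γ}⟩`, with equality iff `f = g` almost
everywhere with respect to the measure `q(x)dx dy`. -/
theorem conditional_density_power_score_strictly_proper
    {m : ℕ} (γ : ℝ) (hγ : 0 < γ)
    (q : (Fin m → ℝ) → ℝ)
    (hqm : Measurable q) (hq0 : ∀ x, 0 ≤ q x)
    (hqi : Integrable q) (hq1 : (∫ x, q x) = 1)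
    (f g : ((Fin m → ℝ) × ℝ) → ℝ)
    (hfm : Measurable f) (hgm : Measurable g)
    (hf0 : ∀ z, 0 ≤ f z) (hg0 : ∀ z, 0 ≤ g z)
    (hgint : Integrable (fun z => q z.1 * g z ^ (1 + γ)))
    (hfgint : Integrable (fun z => f z * q z.1 * g z ^ γ))
    (hfint : Integrable (fun z => q z.1 * f z ^ (1 + γ))) :
    (-(∫ z, q z.1 * f z ^ (1 + γ)) ≤
        γ * (∫ z, q z.1 * g z ^ (1 + γ)) - (1 + γ) * (∫ z, f z * q z.1 * g z ^ γ)) ∧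
    (γ * (∫ z, q z.1 * g z ^ (1 + γ)) - (1 + γ) * (∫ z, f z * q z.1 * g z ^ γ) =
        -(∫ z, q z.1 * f z ^ (1 + γ)) ↔
      f =ᵐ[(volume : Measure ((Fin m → ℝ) × ℝ)).withDensity
            (fun z => ENNReal.ofReal (q z.1))] g) := by
  set D : ((Fin m → ℝ) × ℝ) → ℝ := fun z =>
    q z.1 * (f z ^ (1 + γ) + γ * g z ^ (1 + γ) - (1 + γ) * (f z * g z ^ γ)) with hD
  have hD0 : ∀ z, 0 ≤ D z := fun z =>
    mul_nonneg (hq0 _) (sub_nonneg.2 (key_ineq hγ (hf0 z) (hg0 z)).1)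
  have hDeq : D = fun z => q z.1 * f z ^ (1 + γ) + γ * (q z.1 * g z ^ (1 + γ)) -
      (1 + γ) * (f z * q z.1 * g z ^ γ) := by
    funext z; simp only [hD]; ring
  have hDint : Integrable D := by
    rw [hDeq]
    exact (hfint.add (hgint.const_mul γ)).sub (hfgint.const_mul (1 + γ))
  have hDval : ∫ z, D z = (∫ z, q z.1 * f z ^ (1 + γ)) +
      γ * (∫ z, q z.1 * g z ^ (1 + γ)) - (1 + γ) * (∫ z, f z * q z.1 * g z ^ γ) := by
    have h1 : ∫ z, D z = (∫ z, (q z.1 * f z ^ (1 + γ) + γ * (q z.1 * g z ^ (1 + γ)))) -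
        ∫ z, (1 + γ) * (f z * q z.1 * g z ^ γ) := by
      rw [hDeq]
      exact integral_sub (hfint.add (hgint.const_mul γ)) (hfgint.const_mul (1 + γ))
    have h2 : (∫ z, (q z.1 * f z ^ (1 + γ) + γ * (q z.1 * g z ^ (1 + γ)))) =
        (∫ z, q z.1 * f z ^ (1 + γ)) + ∫ z, γ * (q z.1 * g z ^ (1 + γ)) :=
      integral_add hfint (hgint.const_mul γ)
    rw [h1, h2, integral_const_mul, integral_const_mul]
  have hnn : 0 ≤ ∫ z, D z := integral_nonneg hD0
  constructor
  · linarith [hDval ▸ hnn]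
  · have hzero : (∫ z, D z) = 0 ↔ D =ᵐ[volume] 0 :=
      integral_eq_zero_iff_of_nonneg hD0 hDint
    have hmeas : Measurable (fun z : (Fin m → ℝ) × ℝ => ENNReal.ofReal (q z.1)) :=
      (hqm.comp measurable_fst).ennreal_ofReal
    have hwd : (f =ᵐ[(volume : Measure ((Fin m → ℝ) × ℝ)).withDensity
          (fun z => ENNReal.ofReal (q z.1))] g) ↔
        ∀ᵐ z ∂(volume : Measure ((Fin m → ℝ) × ℝ)),
          ENNReal.ofReal (q z.1) ≠ 0 → f z = g z :=
      ae_withDensity_iff hmeas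
    have hpt : ∀ z, (D z = 0 ↔ (ENNReal.ofReal (q z.1) ≠ 0 → f z = g z)) := by
      intro z
      have hq' : ENNReal.ofReal (q z.1) ≠ 0 ↔ q z.1 ≠ 0 := by
        rw [ne_eq, ENNReal.ofReal_eq_zero, not_le]
        exact ⟨fun h => ne_of_gt h, fun h => lt_of_le_of_ne (hq0 z.1) (Ne.symm h)⟩
      rw [hq']
      constructor
      · intro h hq
        rcases mul_eq_zero.1 h with h | h
        · exact absurd h hq
        · exact (key_ineq hγ (hf0 z) (hg0 z)).2.1 h
      · intro h
        rcases eq_or_ne (q z.1) 0 with h0 | h0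
        · simp [hD, h0]
        · have := (key_ineq hγ (hf0 z) (hg0 z)).2.2 (h h0)
          simp [hD, this]
    have hcongr : (D =ᵐ[volume] 0) ↔
        ∀ᵐ z ∂(volume : Measure ((Fin m → ℝ) × ℝ)),
          ENNReal.ofReal (q z.1) ≠ 0 → f z = g z := by
      constructor
      · intro h
        filter_upwards [h] with z hz
        exact (hpt z).1 hz
      · intro h
        filter_upwards [h] with z hz
        exact (hpt z).2 hz
    rw [hwd, ← hcongr, ← hzero, hDval]
    constructor <;> intro h <;> linarith
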